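/- Let k ≥ 2 and a > 0, and let F(x) = x^k/a^k − 1. Then F(0) = −1, F'(0) = 0, F(a·2^{1/k}) = 1, F'(a·2^{1/k}) ≠ 0, and |F(y)| < 1 for all y ∈ (0, a·2^{1/k}). Moreover there exists a global solution (x,θ): ℝ → ℝ² of x' = cos θ, θ' = F'(x) with sin θ(s) = F(x(s)) and 0 < x(s) ≤ a·2^{1/k} for all s, x(0) = a·2^{1/k}, and x(s) → 0 as s → +∞ and as s → −∞ (a homoclinic, convict-curve solution at level k). -/

import Mathlib

open Filter

/-- The polynomial function `F(y) = y^k/a^k − 1` generating the level-`k` convict curve. -/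
noncomputable def convictF (k : ℕ) (a : ℝ) : ℝ → ℝ := fun y => y ^ k / a ^ k - 1

/-- The right endpoint `a·2^{1/k}` of the strip `0 ≤ x ≤ a·2^{1/k}` where `|F| ≤ 1`. -/
noncomputable def convictEnd (k : ℕ) (a : ℝ) : ℝ := a * (2 : ℝ) ^ ((1 : ℝ) / (k : ℝ))

open Real Set MeasureTheory in
/-- Construction of the angle-type function `φ` solving `φ' = (k/E)·(sin φ)^{2−2/k}`,
with `φ(0) = π/2`, `φ → π` at `+∞`, `φ → 0` at `−∞`. -/
lemma convict_phi (k : ℕ) (hk : 2 ≤ k) (a : ℝ) (ha : 0 < a) :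
    ∃ φ : ℝ → ℝ, (∀ s, φ s ∈ Set.Ioo 0 π) ∧ φ 0 = π / 2 ∧
      (∀ s, HasDerivAt φ (((k : ℝ) / convictEnd k a) * Real.sin (φ s) ^ (2 - 2 / (k : ℝ))) s) ∧
      Tendsto φ atTop (nhds π) ∧ Tendsto φ atBot (nhds 0) := by
  have hkR : (2 : ℝ) ≤ (k : ℝ) := by exact_mod_cast hk
  have hk0 : (0 : ℝ) < (k : ℝ) := by linarith
  have hE : 0 < convictEnd k a := by
    unfold convictEnd; positivity
  set E := convictEnd k a with hEdef
  set P : ℝ := 2 - 2 / (k : ℝ) with hPdef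
  have hP1 : 1 ≤ P := by
    have h2k : 2 / (k : ℝ) ≤ 1 := by
      rw [div_le_one hk0]; exact hkR
    rw [hPdef]; linarith
  set c : ℝ := (k : ℝ) / E with hcdef
  have hc : 0 < c := div_pos hk0 hE
  set f : ℝ → ℝ := fun t => (c * Real.sin t ^ P)⁻¹ with hfdef
  have hπ : 0 < π := Real.pi_pos
  have hmemhalf : π / 2 ∈ Ioo (0 : ℝ) π := ⟨by positivity, by linarith⟩
  have hsin : ∀ t ∈ Ioo (0 : ℝ) π, 0 < Real.sin t := fun t ht =>
    Real.sin_pos_of_pos_of_lt_pi ht.1 ht.2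
  have hgpos : ∀ t ∈ Ioo (0 : ℝ) π, 0 < c * Real.sin t ^ P := fun t ht =>
    mul_pos hc (Real.rpow_pos_of_pos (hsin t ht) P)
  have hfpos : ∀ t ∈ Ioo (0 : ℝ) π, 0 < f t := fun t ht => inv_pos.2 (hgpos t ht)
  have hfcont : ContinuousOn f (Ioo 0 π) := by
    apply ContinuousOn.inv₀
    · exact continuousOn_const.mul (Real.continuous_sin.continuousOn.rpow_const
        (fun t ht => Or.inl (hsin t ht).ne'))
    · exact fun t ht => (hgpos t ht).ne'
  set H : ℝ → ℝ := fun t => ∫ ψ in (π / 2)..t, f ψ with hHdef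
  have hsub : ∀ t ∈ Ioo (0 : ℝ) π, Set.uIcc (π / 2) t ⊆ Ioo 0 π := fun t ht =>
    Set.ordConnected_Ioo.uIcc_subset hmemhalf ht
  have hInt : ∀ t ∈ Ioo (0 : ℝ) π, IntervalIntegrable f volume (π / 2) t := fun t ht =>
    (hfcont.mono (hsub t ht)).intervalIntegrable
  have hHderiv : ∀ t ∈ Ioo (0 : ℝ) π, HasDerivAt H (f t) t := by
    intro t ht
    exact intervalIntegral.integral_hasDerivAt_right (hInt t ht)
      ⟨Ioo 0 π, isOpen_Ioo.mem_nhds ht, hfcont.aestronglyMeasurable measurableSet_Ioo⟩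
      (hfcont.continuousAt (isOpen_Ioo.mem_nhds ht))
  have hHcont : ContinuousOn H (Ioo 0 π) := fun t ht =>
    ((hHderiv t ht).continuousAt).continuousWithinAt
  have hHmono : StrictMonoOn H (Ioo 0 π) := by
    apply strictMonoOn_of_deriv_pos (convex_Ioo 0 π) hHcont
    intro t ht
    rw [interior_Ioo] at ht
    rw [(hHderiv t ht).deriv]
    exact hfpos t ht
  have hEk0 : (0:ℝ) < E / (k : ℝ) := div_pos hE hk0
  have hcinv : c⁻¹ = E / (k : ℝ) := by rw [hcdef, inv_div]
  -- upper divergence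
  have hhigh : ∀ s : ℝ, ∃ t, t ∈ Ioo (0 : ℝ) π ∧ s < H t := by
    intro s
    set δ := min (π / 2) (Real.exp (Real.log (π / 2) - (s + 1) * ((k : ℝ) / E))) with hδdef
    have hδpos : 0 < δ := lt_min (by positivity) (Real.exp_pos _)
    have hδle : δ ≤ π / 2 := min_le_left _ _
    set t := π - δ with htdef
    have htmem : t ∈ Ioo (0 : ℝ) π := ⟨by simp only [htdef]; linarith, by simp only [htdef]; linarith⟩
    have hthalf : π / 2 ≤ t := by simp only [htdef]; linarith
    refine ⟨t, htmem, ?_⟩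
    have hptwise : ∀ ψ ∈ Icc (π / 2) t, (E / (k : ℝ)) * (π - ψ)⁻¹ ≤ f ψ := by
      intro ψ hψ
      have hψπ : ψ < π := lt_of_le_of_lt hψ.2 htmem.2
      have hψmem : ψ ∈ Ioo (0 : ℝ) π := ⟨lt_of_lt_of_le (by positivity) hψ.1, hψπ⟩
      have hs0 : 0 < Real.sin ψ := hsin ψ hψmem
      have hsub0 : 0 < π - ψ := by linarith
      have h1 : Real.sin ψ ^ P ≤ π - ψ := by
        calc Real.sin ψ ^ P ≤ Real.sin ψ ^ (1 : ℝ) :=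
              Real.rpow_le_rpow_of_exponent_ge hs0 (Real.sin_le_one ψ) hP1
          _ = Real.sin ψ := Real.rpow_one _
          _ = Real.sin (π - ψ) := (Real.sin_pi_sub ψ).symm
          _ ≤ π - ψ := Real.sin_le hsub0.le
      have h2 : (π - ψ)⁻¹ ≤ (Real.sin ψ ^ P)⁻¹ :=
        inv_anti₀ (Real.rpow_pos_of_pos hs0 P) h1
      calc (E / (k : ℝ)) * (π - ψ)⁻¹ ≤ (E / (k : ℝ)) * (Real.sin ψ ^ P)⁻¹ :=
            mul_le_mul_of_nonneg_left h2 hEk0.le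
        _ = f ψ := by simp only [hfdef]; rw [mul_inv, hcinv]
    have hint1 : IntervalIntegrable (fun ψ => (E / (k : ℝ)) * (π - ψ)⁻¹) volume (π / 2) t := by
      apply ContinuousOn.intervalIntegrable
      apply ContinuousOn.mul continuousOn_const
      apply ContinuousOn.inv₀ (continuousOn_const.sub continuousOn_id)
      intro ψ hψ
      rw [Set.uIcc_of_le hthalf] at hψ
      have : ψ < π := lt_of_le_of_lt hψ.2 htmem.2
      exact sub_ne_zero.2 (ne_of_gt this)
    have hmono := intervalIntegral.integral_mono_on hthalf hint1 (hInt t htmem) hptwise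
    have hcalc : (∫ ψ in (π / 2)..t, (E / (k : ℝ)) * (π - ψ)⁻¹) =
        (E / (k : ℝ)) * (Real.log (π / 2) - Real.log δ) := by
      have hginteg : ∀ ψ ∈ Set.uIcc (π / 2) t,
          HasDerivAt (fun u => -((E / (k : ℝ)) * Real.log (π - u))) ((E / (k : ℝ)) * (π - ψ)⁻¹) ψ := by
        intro ψ hψ
        rw [Set.uIcc_of_le hthalf] at hψ
        have hψπ : 0 < π - ψ := by
          have h2 := hψ.2
          simp only [htdef] at h2
          linarith
        have h1 : HasDerivAt (fun u : ℝ => π - u) (-1) ψ := (hasDerivAt_id ψ).const_sub π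
        have h2 : HasDerivAt (fun u => Real.log (π - u)) (-1 / (π - ψ)) ψ :=
          h1.log (ne_of_gt hψπ)
        have h3 : HasDerivAt (fun u => -((E / (k : ℝ)) * Real.log (π - u)))
            (-((E / (k : ℝ)) * (-1 / (π - ψ)))) ψ := (h2.const_mul (E / (k : ℝ))).neg
        convert h3 using 1
        ring
      rw [intervalIntegral.integral_eq_sub_of_hasDerivAt hginteg hint1]
      have h4 : π - t = δ := by rw [htdef]; ring
      have h5 : π - π / 2 = π / 2 := by ring
      rw [h4, h5]
      ring
    have hlogδ : Real.log δ ≤ Real.log (π / 2) - (s + 1) * ((k : ℝ) / E) := by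
      calc Real.log δ ≤ Real.log (Real.exp (Real.log (π / 2) - (s + 1) * ((k : ℝ) / E))) :=
            Real.log_le_log hδpos (min_le_right _ _)
        _ = _ := Real.log_exp _
    have hfinal : s + 1 ≤ (E / (k : ℝ)) * (Real.log (π / 2) - Real.log δ) := by
      have h := mul_le_mul_of_nonneg_left
        (by linarith : (s + 1) * ((k : ℝ) / E) ≤ Real.log (π / 2) - Real.log δ) hEk0.le
      calc s + 1 = (E / (k : ℝ)) * ((s + 1) * ((k : ℝ) / E)) := by
            field_simp
        _ ≤ _ := h
    have hHt : H t = ∫ ψ in (π / 2)..t, f ψ := rfl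
    rw [hHt]
    linarith [hmono, hcalc ▸ hfinal]
  -- lower divergence
  have hlow : ∀ s : ℝ, ∃ t, t ∈ Ioo (0 : ℝ) π ∧ H t < s := by
    intro s
    set t := min (π / 2) (Real.exp (Real.log (π / 2) + (s - 1) * ((k : ℝ) / E))) with htdef
    have htpos : 0 < t := lt_min (by positivity) (Real.exp_pos _)
    have htle : t ≤ π / 2 := min_le_left _ _
    have htmem : t ∈ Ioo (0 : ℝ) π := ⟨htpos, by linarith⟩
    refine ⟨t, htmem, ?_⟩
    have hptwise : ∀ ψ ∈ Icc t (π / 2), (E / (k : ℝ)) * ψ⁻¹ ≤ f ψ := by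
      intro ψ hψ
      have hψ0 : 0 < ψ := lt_of_lt_of_le htpos hψ.1
      have hψmem : ψ ∈ Ioo (0 : ℝ) π := ⟨hψ0, lt_of_le_of_lt hψ.2 (by linarith)⟩
      have hs0 : 0 < Real.sin ψ := hsin ψ hψmem
      have h1 : Real.sin ψ ^ P ≤ ψ := by
        calc Real.sin ψ ^ P ≤ Real.sin ψ ^ (1 : ℝ) :=
              Real.rpow_le_rpow_of_exponent_ge hs0 (Real.sin_le_one ψ) hP1
          _ = Real.sin ψ := Real.rpow_one _
          _ ≤ ψ := Real.sin_le hψ0.le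
      have h2 : ψ⁻¹ ≤ (Real.sin ψ ^ P)⁻¹ :=
        inv_anti₀ (Real.rpow_pos_of_pos hs0 P) h1
      calc (E / (k : ℝ)) * ψ⁻¹ ≤ (E / (k : ℝ)) * (Real.sin ψ ^ P)⁻¹ :=
            mul_le_mul_of_nonneg_left h2 hEk0.le
        _ = f ψ := by simp only [hfdef]; rw [mul_inv, hcinv]
    have hint1 : IntervalIntegrable (fun ψ => (E / (k : ℝ)) * ψ⁻¹) volume t (π / 2) := by
      apply ContinuousOn.intervalIntegrable
      apply ContinuousOn.mul continuousOn_const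
      apply ContinuousOn.inv₀ continuousOn_id
      intro ψ hψ
      rw [Set.uIcc_of_le htle] at hψ
      exact (lt_of_lt_of_le htpos hψ.1).ne'
    have hint2 : IntervalIntegrable f volume t (π / 2) :=
      ((hInt t htmem).symm)
    have hmono := intervalIntegral.integral_mono_on htle hint1 hint2 hptwise
    have hcalc : (∫ ψ in t..(π / 2), (E / (k : ℝ)) * ψ⁻¹) =
        (E / (k : ℝ)) * (Real.log (π / 2) - Real.log t) := by
      have hginteg : ∀ ψ ∈ Set.uIcc t (π / 2),
          HasDerivAt (fun u => (E / (k : ℝ)) * Real.log u) ((E / (k : ℝ)) * ψ⁻¹) ψ := by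
        intro ψ hψ
        rw [Set.uIcc_of_le htle] at hψ
        have hψ0 : 0 < ψ := lt_of_lt_of_le htpos hψ.1
        exact (Real.hasDerivAt_log hψ0.ne').const_mul (E / (k : ℝ))
      rw [intervalIntegral.integral_eq_sub_of_hasDerivAt hginteg hint1]
      ring
    have hlogt : Real.log t ≤ Real.log (π / 2) + (s - 1) * ((k : ℝ) / E) := by
      calc Real.log t ≤ Real.log (Real.exp (Real.log (π / 2) + (s - 1) * ((k : ℝ) / E))) :=
            Real.log_le_log htpos (min_le_right _ _)
        _ = _ := Real.log_exp _
    have hfinal : (E / (k : ℝ)) * (Real.log t - Real.log (π / 2)) ≤ s - 1 := by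
      have h := mul_le_mul_of_nonneg_left
        (by linarith : Real.log t - Real.log (π / 2) ≤ (s - 1) * ((k : ℝ) / E)) hEk0.le
      calc (E / (k : ℝ)) * (Real.log t - Real.log (π / 2)) ≤
            (E / (k : ℝ)) * ((s - 1) * ((k : ℝ) / E)) := h
        _ = s - 1 := by field_simp
    have hHt : H t = -(∫ ψ in t..(π / 2), f ψ) := by
      rw [hHdef]
      simp only
      rw [intervalIntegral.integral_symm]
    rw [hHt]
    have : (E / (k : ℝ)) * (Real.log (π / 2) - Real.log t) ≤ ∫ ψ in t..(π / 2), f ψ := by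
      linarith [hmono, hcalc]
    linarith
  -- surjectivity
  have hsurj : ∀ s : ℝ, ∃ t, t ∈ Ioo (0 : ℝ) π ∧ H t = s := by
    intro s
    obtain ⟨t₁, ht₁, hHt₁⟩ := hlow s
    obtain ⟨t₂, ht₂, hHt₂⟩ := hhigh s
    have hcont' : ContinuousOn H (uIcc t₁ t₂) :=
      hHcont.mono (Set.ordConnected_Ioo.uIcc_subset ht₁ ht₂)
    have hs : s ∈ uIcc (H t₁) (H t₂) := by
      rw [Set.mem_uIcc]; left; exact ⟨le_of_lt hHt₁, le_of_lt hHt₂⟩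
    obtain ⟨t, ht, hHt⟩ := intermediate_value_uIcc hcont' hs
    exact ⟨t, Set.ordConnected_Ioo.uIcc_subset ht₁ ht₂ ht, hHt⟩
  choose φ hφmem hφeq using hsurj
  have hH0 : H (π / 2) = 0 := intervalIntegral.integral_same
  have hφzero : φ 0 = π / 2 := by
    apply hHmono.injOn (hφmem 0) hmemhalf
    rw [hφeq 0, hH0]
  -- continuity of φ
  have hφcont : ∀ s, ContinuousAt φ s := by
    intro s₀
    rw [Metric.continuousAt_iff]
    intro ε hε
    obtain ⟨ht₀0, ht₀π⟩ := hφmem s₀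
    set t₀ := φ s₀
    set ε' := min (min (ε / 2) (t₀ / 2)) ((π - t₀) / 2) with hε'def
    have hε'pos : 0 < ε' :=
      lt_min (lt_min (by linarith) (by linarith)) (by linarith)
    have hε'1 : ε' ≤ ε / 2 := le_trans (min_le_left _ _) (min_le_left _ _)
    have hε'2 : ε' ≤ t₀ / 2 := le_trans (min_le_left _ _) (min_le_right _ _)
    have hε'3 : ε' ≤ (π - t₀) / 2 := min_le_right _ _
    have hmem₁ : t₀ - ε' ∈ Ioo (0 : ℝ) π := ⟨by linarith, by linarith⟩
    have hmem₂ : t₀ + ε' ∈ Ioo (0 : ℝ) π := ⟨by linarith, by linarith⟩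
    have h₁ : H (t₀ - ε') < s₀ := by
      have := hHmono hmem₁ ⟨ht₀0, ht₀π⟩ (by linarith)
      rwa [hφeq s₀] at this
    have h₂ : s₀ < H (t₀ + ε') := by
      have := hHmono ⟨ht₀0, ht₀π⟩ hmem₂ (by linarith)
      rwa [hφeq s₀] at this
    refine ⟨min (s₀ - H (t₀ - ε')) (H (t₀ + ε') - s₀),
      lt_min (by linarith) (by linarith), ?_⟩
    intro s hdist
    rw [Real.dist_eq] at hdist
    have hd := abs_lt.1 hdist
    have hd1 := hd.1
    have hd2 := hd.2
    have hm1 := min_le_left (s₀ - H (t₀ - ε')) (H (t₀ + ε') - s₀)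
    have hm2 := min_le_right (s₀ - H (t₀ - ε')) (H (t₀ + ε') - s₀)
    have hlt1 : H (t₀ - ε') < H (φ s) := by rw [hφeq s]; linarith
    have hlt2 : H (φ s) < H (t₀ + ε') := by rw [hφeq s]; linarith
    have hb1 : t₀ - ε' < φ s := (hHmono.lt_iff_lt hmem₁ (hφmem s)).1 hlt1
    have hb2 : φ s < t₀ + ε' := (hHmono.lt_iff_lt (hφmem s) hmem₂).1 hlt2
    rw [Real.dist_eq, abs_lt]
    constructor <;> linarith
  -- derivative of φ
  have hφderiv : ∀ s, HasDerivAt φ (c * Real.sin (φ s) ^ P) s := by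
    intro s
    have h1 := hHderiv (φ s) (hφmem s)
    have h2 := HasDerivAt.of_local_left_inverse (hφcont s) h1 (hfpos _ (hφmem s)).ne'
      (Filter.Eventually.of_forall hφeq)
    simpa only [hfdef, inv_inv] using h2
  -- limits
  have htop : Tendsto φ atTop (nhds π) := by
    rw [tendsto_order]
    constructor
    · intro b hb
      rcases le_or_gt b 0 with hb0 | hb0
      · exact Eventually.of_forall (fun s => lt_of_le_of_lt hb0 (hφmem s).1)
      · have hbm : b ∈ Ioo (0 : ℝ) π := ⟨hb0, hb⟩
        filter_upwards [eventually_gt_atTop (H b)] with s hs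
        have : H b < H (φ s) := by rw [hφeq s]; exact hs
        exact (hHmono.lt_iff_lt hbm (hφmem s)).1 this
    · intro b hb
      exact Eventually.of_forall (fun s => lt_trans (hφmem s).2 hb)
  have hbot : Tendsto φ atBot (nhds 0) := by
    rw [tendsto_order]
    constructor
    · intro b hb
      exact Eventually.of_forall (fun s => lt_of_lt_of_le hb (le_of_lt (hφmem s).1))
    · intro b hb
      rcases lt_or_ge b π with hbπ | hbπ
      · have hbm : b ∈ Ioo (0 : ℝ) π := ⟨hb, hbπ⟩
        filter_upwards [eventually_lt_atBot (H b)] with s hs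
        have : H (φ s) < H b := by rw [hφeq s]; exact hs
        exact (hHmono.lt_iff_lt (hφmem s) hbm).1 this
      · exact Eventually.of_forall (fun s => lt_of_lt_of_le (hφmem s).2 hbπ)
  exact ⟨φ, hφmem, hφzero, hφderiv, htop, hbot⟩

/-- for `k ≥ 2`, `a > 0` and `F(y) = y^k/a^k − 1` one has `F(0) = −1`,
`F'(0) = 0`, `F(a·2^{1/k}) = 1`, `F'(a·2^{1/k}) ≠ 0`, `|F| < 1` on `(0, a·2^{1/k})`, and
there is a global solution of `x' = cos θ`, `θ' = F'(x)` with `sin θ = F(x)`,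
`0 < x ≤ a·2^{1/k}`, `x(0) = a·2^{1/k}`, and `x(s) → 0` as `s → ±∞`: a homoclinic
(convict-curve) solution at level `k`. -/
theorem stmt_16 (k : ℕ) (hk : 2 ≤ k) (a : ℝ) (ha : 0 < a) :
    convictF k a 0 = -1 ∧
    deriv (convictF k a) 0 = 0 ∧
    convictF k a (convictEnd k a) = 1 ∧
    deriv (convictF k a) (convictEnd k a) ≠ 0 ∧
    (∀ y ∈ Set.Ioo 0 (convictEnd k a), |convictF k a y| < 1) ∧
    ∃ x θ : ℝ → ℝ,
      (∀ s : ℝ, HasDerivAt x (Real.cos (θ s)) s ∧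
        HasDerivAt θ (deriv (convictF k a) (x s)) s ∧
        Real.sin (θ s) = convictF k a (x s) ∧
        0 < x s ∧ x s ≤ convictEnd k a) ∧
      x 0 = convictEnd k a ∧
      Tendsto x atTop (nhds 0) ∧ Tendsto x atBot (nhds 0) := by
  have hkR : (2 : ℝ) ≤ (k : ℝ) := by exact_mod_cast hk
  have hk0 : (0 : ℝ) < (k : ℝ) := by linarith
  have hkne : (k : ℝ) ≠ 0 := ne_of_gt hk0
  have hkne' : k ≠ 0 := by omega
  have hE : 0 < convictEnd k a := by unfold convictEnd; positivity
  have hEne : convictEnd k a ≠ 0 := ne_of_gt hE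
  have hak : (0 : ℝ) < a ^ k := pow_pos ha k
  have hFd : ∀ y : ℝ, HasDerivAt (convictF k a) ((k * y ^ (k - 1)) / a ^ k) y := by
    intro y
    exact ((hasDerivAt_pow k y).div_const (a ^ k)).sub_const 1
  have hEk : convictEnd k a ^ k = 2 * a ^ k := by
    rw [convictEnd, mul_pow, ← Real.rpow_natCast ((2 : ℝ) ^ ((1 : ℝ) / (k : ℝ))) k,
      ← Real.rpow_mul (by norm_num : (0 : ℝ) ≤ 2), one_div, inv_mul_cancel₀ hkne,
      Real.rpow_one]
    ring
  refine ⟨?_, ?_, ?_, ?_, ?_, ?_⟩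
  · simp [convictF, zero_pow hkne']
  · rw [(hFd 0).deriv, zero_pow (by omega : k - 1 ≠ 0)]
    simp
  · simp only [convictF, hEk]
    field_simp
    norm_num
  · rw [(hFd _).deriv]
    have h1 : 0 < convictEnd k a ^ (k - 1) := pow_pos hE _
    positivity
  · intro y hy
    rw [abs_lt]
    simp only [convictF]
    constructor
    · have : 0 < y ^ k / a ^ k := div_pos (pow_pos hy.1 k) hak
      linarith
    · have hyk : y ^ k < 2 * a ^ k := by
        calc y ^ k < convictEnd k a ^ k := pow_lt_pow_left₀ hy.2 hy.1.le hkne'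
          _ = 2 * a ^ k := hEk
      have : y ^ k / a ^ k < 2 := (div_lt_iff₀ hak).2 (by linarith)
      linarith
  · obtain ⟨φ, hmem, hzero, hderiv, htop, hbot⟩ := convict_phi k hk a ha
    set E := convictEnd k a with hEdef
    refine ⟨fun s => E * Real.sin (φ s) ^ ((2 : ℝ) / (k : ℝ)),
      fun s => 2 * φ s - Real.pi / 2, ?_, ?_, ?_, ?_⟩
    · intro s
      obtain ⟨ht0, htπ⟩ := hmem s
      have hs0 : 0 < Real.sin (φ s) := Real.sin_pos_of_pos_of_lt_pi ht0 htπ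
      have hs1 : Real.sin (φ s) ≤ 1 := Real.sin_le_one _
      have hd1 := hderiv s
      have hsinsum : Real.sin (φ s) ^ (2 - 2 / (k : ℝ)) * Real.sin (φ s) ^ ((2 : ℝ) / (k : ℝ) - 1)
          = Real.sin (φ s) := by
        rw [← Real.rpow_add hs0, show (2 - 2 / (k : ℝ)) + ((2 : ℝ) / (k : ℝ) - 1) = 1 by ring,
          Real.rpow_one]
      have hpow : (Real.sin (φ s) ^ ((2 : ℝ) / (k : ℝ))) ^ (k - 1)
          = Real.sin (φ s) ^ (2 - 2 / (k : ℝ)) := by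
        rw [← Real.rpow_natCast (Real.sin (φ s) ^ ((2 : ℝ) / (k : ℝ))) (k - 1),
          ← Real.rpow_mul hs0.le]
        congr 1
        have hcast : ((k - 1 : ℕ) : ℝ) = (k : ℝ) - 1 := by
          rw [Nat.cast_sub (by omega)]; norm_num
        rw [hcast]
        field_simp
      have hA : (Real.sin (φ s) ^ ((2 : ℝ) / (k : ℝ))) ^ k = Real.sin (φ s) ^ 2 := by
        rw [← Real.rpow_natCast (Real.sin (φ s) ^ ((2 : ℝ) / (k : ℝ))) k,
          ← Real.rpow_mul hs0.le, div_mul_cancel₀ _ hkne,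
          show (2 : ℝ) = ((2 : ℕ) : ℝ) by norm_num, Real.rpow_natCast]
      refine ⟨?_, ?_, ?_, ?_, ?_⟩
      · -- x' = cos θ
        have hd2 := hd1.sin
        have hd3 := hd2.rpow_const (p := (2 : ℝ) / (k : ℝ)) (Or.inl hs0.ne')
        have hd4 := hd3.const_mul E
        have hxeq : E * (Real.cos (φ s) * ((k : ℝ) / E * Real.sin (φ s) ^ (2 - 2 / (k : ℝ)))
              * ((2 : ℝ) / (k : ℝ)) * Real.sin (φ s) ^ ((2 : ℝ) / (k : ℝ) - 1))
            = Real.cos (2 * φ s - Real.pi / 2) := by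
          rw [Real.cos_sub, Real.cos_pi_div_two, Real.sin_pi_div_two, Real.sin_two_mul]
          rw [show E * (Real.cos (φ s) * ((k : ℝ) / E * Real.sin (φ s) ^ (2 - 2 / (k : ℝ)))
              * ((2 : ℝ) / (k : ℝ)) * Real.sin (φ s) ^ ((2 : ℝ) / (k : ℝ) - 1))
            = (E * ((k : ℝ) / E) * ((2 : ℝ) / (k : ℝ))) * Real.cos (φ s)
              * (Real.sin (φ s) ^ (2 - 2 / (k : ℝ))
                * Real.sin (φ s) ^ ((2 : ℝ) / (k : ℝ) - 1)) from by ring, hsinsum]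
          have hc2 : E * ((k : ℝ) / E) * ((2 : ℝ) / (k : ℝ)) = 2 := by field_simp
          rw [hc2]
          ring
        exact hxeq ▸ hd4
      · -- θ' = F'(x)
        have hdθ := (hd1.const_mul 2).sub_const (Real.pi / 2)
        have heq : 2 * ((k : ℝ) / E * Real.sin (φ s) ^ (2 - 2 / (k : ℝ)))
            = deriv (convictF k a) (E * Real.sin (φ s) ^ ((2 : ℝ) / (k : ℝ))) := by
          rw [(hFd _).deriv, mul_pow, hpow]
          have hEpow : E ^ (k - 1) = 2 * a ^ k / E := by
            have h1 : E ^ (k - 1) * E = E ^ k := by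
              rw [← pow_succ]
              congr 1
              omega
            field_simp
            rw [h1, hEk]
          rw [hEpow]
          field_simp
        exact heq ▸ hdθ
      · -- sin θ = F(x)
        have hlhs : Real.sin (2 * φ s - Real.pi / 2) = 2 * Real.sin (φ s) ^ 2 - 1 := by
          rw [Real.sin_sub, Real.cos_pi_div_two, Real.sin_pi_div_two, Real.cos_two_mul,
            Real.cos_sq']
          ring
        rw [hlhs]
        simp only [convictF]
        rw [mul_pow, hA, hEk]
        field_simp
      · exact mul_pos hE (Real.rpow_pos_of_pos hs0 _)
      · have hle : Real.sin (φ s) ^ ((2 : ℝ) / (k : ℝ)) ≤ 1 :=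
          Real.rpow_le_one hs0.le hs1 (by positivity)
        calc E * Real.sin (φ s) ^ ((2 : ℝ) / (k : ℝ)) ≤ E * 1 :=
              mul_le_mul_of_nonneg_left hle hE.le
          _ = E := mul_one E
    · show E * Real.sin (φ 0) ^ ((2 : ℝ) / (k : ℝ)) = E
      rw [hzero, Real.sin_pi_div_two, Real.one_rpow, mul_one]
    · have h1 : Tendsto (fun s => Real.sin (φ s)) atTop (nhds 0) := by
        have := (Real.continuous_sin.tendsto Real.pi).comp htop
        rwa [Real.sin_pi] at this
      have h2 : Tendsto (fun s => Real.sin (φ s) ^ ((2 : ℝ) / (k : ℝ))) atTop (nhds 0) := by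
        have hc := (Real.continuousAt_rpow_const 0 ((2 : ℝ) / (k : ℝ))
          (Or.inr (by positivity))).tendsto.comp h1
        rwa [Real.zero_rpow (by positivity : (2 : ℝ) / (k : ℝ) ≠ 0)] at hc
      have := h2.const_mul E
      simpa using this
    · have h1 : Tendsto (fun s => Real.sin (φ s)) atBot (nhds 0) := by
        have := (Real.continuous_sin.tendsto 0).comp hbot
        rwa [Real.sin_zero] at this
      have h2 : Tendsto (fun s => Real.sin (φ s) ^ ((2 : ℝ) / (k : ℝ))) atBot (nhds 0) := by
        have hc := (Real.continuousAt_rpow_const 0 ((2 : ℝ) / (k : ℝ))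
          (Or.inr (by positivity))).tendsto.comp h1
        rwa [Real.zero_rpow (by positivity : (2 : ℝ) / (k : ℝ) ≠ 0)] at hc
      have := h2.const_mul E
      simpa using this
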